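/- Eigenvalue bounds for biased shuffles with α ≥ 1: let α ≥ 1 and let λ ⊢ n be a partition with first part λ₁ = n − k. Then eig_α(T_λ^↓) ≤ 1 − k/n; moreover, if k ≤ n/4 then eig_α(T_λ^↓) ≤ 1 − k·(n−k)·N_{α−1}(n)/(n·N_α(n)). -/

import Mathlib

open scoped BigOperators

/-- `N_α(n) = ∑_{j=1}^n j^α`. -/
noncomputable def Nalpha (α : ℝ) (n : ℕ) : ℝ := ∑ j ∈ Finset.Icc 1 n, (j : ℝ) ^ α

/-- The biased eigenvalue statistic of a tableau-filling `T` of the Young diagram `μ`: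
`eig_α(T) = (1/N_α(n)) ∑_{(i,j)∈μ} (j-i+1)·T(i,j)^{α−1}` (cells are 0-indexed, which
leaves `j-i+1` unchanged). -/
noncomputable def eigb (α : ℝ) (μ : YoungDiagram) (T : ℕ × ℕ → ℕ) : ℝ :=
  (Nalpha α μ.card)⁻¹ *
    ∑ c ∈ μ.cells, (((c.2 : ℝ) - (c.1 : ℝ) + 1) * ((T c : ℝ) ^ (α - 1)))
/-- The column-reading tableau `T_λ^↓`: entries `1,…,n` inserted down columns, top to bottom,
leftmost column first. -/
def colTab (μ : YoungDiagram) : ℕ × ℕ → ℕ := fun c =>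
  (μ.cells.filter (fun c' => c'.2 < c.2 ∨ (c'.2 = c.2 ∧ c'.1 ≤ c.1))).card

open Finset

namespace EigAux

variable (μ : YoungDiagram)

/-- number of columns -/
def ww : ℕ := μ.rowLen 0
/-- column heights -/
def hh (j : ℕ) : ℕ := μ.colLen j
/-- cells strictly left of column j -/
def ss (j : ℕ) : ℕ := ∑ b ∈ Finset.range j, hh μ b
/-- non-top cells strictly left of column j -/
def tt (j : ℕ) : ℕ := ∑ b ∈ Finset.range j, (hh μ b - 1)
/-- the value of colTab at a cell -/
def vfun (c : ℕ × ℕ) : ℕ := ss μ c.2 + c.1 + 1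

lemma h_pos {j : ℕ} (hj : j < ww μ) : 1 ≤ hh μ j := by
  have : (0, j) ∈ μ := YoungDiagram.mem_iff_lt_rowLen.2 hj
  exact YoungDiagram.mem_iff_lt_colLen.1 this

lemma h_anti {a b : ℕ} (hab : a ≤ b) : hh μ b ≤ hh μ a := μ.colLen_anti a b hab

lemma s_eq {j : ℕ} (hj : j ≤ ww μ) : ss μ j = tt μ j + j := by
  unfold ss tt
  have : ∀ b ∈ Finset.range j, hh μ b = (hh μ b - 1) + 1 := fun b hb =>
    (Nat.succ_pred_eq_of_pos (h_pos μ (lt_of_lt_of_le (Finset.mem_range.1 hb) hj))).symm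
  rw [Finset.sum_congr rfl this, Finset.sum_add_distrib]
  simp

lemma mem_cells_iff {i j : ℕ} : (i, j) ∈ μ.cells ↔ j < ww μ ∧ i < hh μ j := by
  rw [YoungDiagram.mem_cells]
  constructor
  · intro hm
    refine ⟨?_, YoungDiagram.mem_iff_lt_colLen.1 hm⟩
    have : (0, j) ∈ μ := μ.up_left_mem (Nat.zero_le _) le_rfl hm
    exact YoungDiagram.mem_iff_lt_rowLen.1 this
  · rintro ⟨_, hi⟩
    exact YoungDiagram.mem_iff_lt_colLen.2 hi

lemma cells_sum {M : Type*} [AddCommMonoid M] (F : ℕ × ℕ → M) :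
    ∑ c ∈ μ.cells, F c = ∑ j ∈ Finset.range (ww μ), ∑ i ∈ Finset.range (hh μ j), F (i, j) := by
  rw [Finset.sum_sigma']
  refine Finset.sum_nbij' (fun c => ⟨c.2, c.1⟩) (fun p => (p.2, p.1)) ?_ ?_ ?_ ?_ ?_
  · intro c hc
    have := (mem_cells_iff μ (i := c.1) (j := c.2)).1 (by simpa using hc)
    simp [Finset.mem_sigma, this.1, this.2]
  · rintro ⟨j, i⟩ hp
    simp only [Finset.mem_sigma, Finset.mem_range] at hp
    exact (mem_cells_iff μ).2 ⟨hp.1, hp.2⟩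
  · intro c hc; rfl
  · rintro ⟨j, i⟩ hp; rfl
  · intro c hc; rfl

lemma s_mono : Monotone (ss μ) := by
  intro a b hab
  exact Finset.sum_le_sum_of_subset (Finset.range_subset_range.2 hab)

lemma s_w : ss μ (ww μ) = μ.card := by
  have := cells_sum μ (fun _ => (1 : ℕ))
  simp only [Finset.sum_const, smul_eq_mul, mul_one] at this
  unfold ss hh
  simp only [Finset.card_range] at this
  show ∑ b ∈ Finset.range (ww μ), hh μ b = μ.card
  rw [← this]

lemma sum_range_split {M : Type*} [AddCommMonoid M] (f : ℕ → M) {a b : ℕ} (hab : a ≤ b) :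
    ∑ i ∈ Finset.range b, f i = ∑ i ∈ Finset.range a, f i + ∑ i ∈ Finset.Ico a b, f i := by
  rw [range_eq_Ico, range_eq_Ico]
  exact (Finset.sum_Ico_consecutive f (Nat.zero_le _) hab).symm

lemma colTab_eq {i j : ℕ} (hc : (i, j) ∈ μ.cells) : colTab μ (i, j) = ss μ j + i + 1 := by
  obtain ⟨hj, hi⟩ := (mem_cells_iff μ).1 hc
  unfold colTab
  rw [Finset.card_filter,
    cells_sum μ (fun c' => if c'.2 < (i, j).2 ∨ (c'.2 = (i, j).2 ∧ c'.1 ≤ (i, j).1) then 1 else 0)]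
  have hstep : ∀ j' ∈ Finset.range (ww μ),
      (∑ i' ∈ Finset.range (hh μ j'),
        if (i', j').2 < (i, j).2 ∨ ((i', j').2 = (i, j).2 ∧ (i', j').1 ≤ (i, j).1) then (1:ℕ) else 0)
      = if j' < j then hh μ j' else if j' = j then i + 1 else 0 := by
    intro j' _
    rcases lt_trichotomy j' j with hlt | heq | hgt
    · simp [hlt]
    · subst heq
      simp only [lt_self_iff_false, true_and, false_or, if_pos rfl]
      have : ∀ i' ∈ Finset.range (hh μ j'), (if i' ≤ i then (1:ℕ) else 0)
          = if i' ∈ Finset.range (i+1) then 1 else 0 := by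
        intro i' _
        simp [Finset.mem_range, Nat.lt_succ_iff]
      rw [Finset.sum_congr rfl this, Finset.sum_ite_mem]
      have hsub : Finset.range (hh μ j') ∩ Finset.range (i+1) = Finset.range (i+1) := by
        ext a
        simp only [Finset.mem_inter, Finset.mem_range]
        omega
      rw [hsub]
      simp
    · have h1 : ¬ (j' < j) := by omega
      have h2 : ¬ (j' = j) := by omega
      simp [h1, h2]
  rw [Finset.sum_congr rfl hstep, sum_range_split _ (Nat.succ_le_of_lt hj),
    Finset.sum_range_succ]
  have hIco : ∀ j' ∈ Finset.Ico (j+1) (ww μ),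
      (if j' < j then hh μ j' else if j' = j then i + 1 else 0) = 0 := by
    intro j' hj'
    have := (Finset.mem_Ico.1 hj').1
    have h1 : ¬ (j' < j) := by omega
    have h2 : ¬ (j' = j) := by omega
    simp [h1, h2]
  rw [Finset.sum_congr rfl hIco, Finset.sum_const_zero, add_zero, if_neg (lt_irrefl j),
    if_pos rfl]
  have hr : ∀ j' ∈ Finset.range j, (if j' < j then hh μ j' else if j' = j then i + 1 else 0)
      = hh μ j' := by
    intro j' hj'
    simp [Finset.mem_range.1 hj']
  rw [Finset.sum_congr rfl hr]
  show ss μ j + (i + 1) = ss μ j + i + 1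
  omega

lemma vfun_mem {c : ℕ × ℕ} (hc : c ∈ μ.cells) : vfun μ c ∈ Finset.Icc 1 μ.card := by
  obtain ⟨hj, hi⟩ := (mem_cells_iff μ (i := c.1) (j := c.2)).1 (by simpa using hc)
  rw [Finset.mem_Icc]
  constructor
  · unfold vfun; omega
  · have h1 : vfun μ c ≤ ss μ (c.2 + 1) := by
      unfold vfun ss
      rw [Finset.sum_range_succ]
      omega
    have h2 : ss μ (c.2 + 1) ≤ ss μ (ww μ) := s_mono μ (Nat.succ_le_of_lt hj)
    rw [← s_w μ]
    omega

lemma vfun_inj {c c' : ℕ × ℕ} (hc : c ∈ μ.cells) (hc' : c' ∈ μ.cells)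
    (h : vfun μ c = vfun μ c') : c = c' := by
  obtain ⟨hj, hi⟩ := (mem_cells_iff μ (i := c.1) (j := c.2)).1 (by simpa using hc)
  obtain ⟨hj', hi'⟩ := (mem_cells_iff μ (i := c'.1) (j := c'.2)).1 (by simpa using hc')
  have key : ∀ a b : ℕ × ℕ, a.1 < hh μ a.2 → a.2 < b.2 → vfun μ a < vfun μ b := by
    intro a b ha hab
    have h1 : ss μ (a.2 + 1) = ss μ a.2 + hh μ a.2 := Finset.sum_range_succ _ _
    have h2 : ss μ (a.2 + 1) ≤ ss μ b.2 := s_mono μ (Nat.succ_le_of_lt hab)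
    unfold vfun
    omega
  rcases lt_trichotomy c.2 c'.2 with hlt | heq | hgt
  · exact absurd h (Nat.ne_of_lt (key c c' hi hlt))
  · have : c.1 = c'.1 := by unfold vfun at h; rw [heq] at h; omega
    exact Prod.ext this heq
  · exact absurd h.symm (Nat.ne_of_lt (key c' c hi' hgt))

lemma sum_vfun {M : Type*} [AddCommMonoid M] (F : ℕ → M) :
    ∑ c ∈ μ.cells, F (vfun μ c) = ∑ m ∈ Finset.Icc 1 μ.card, F m := by
  refine Finset.sum_bij (fun c _ => vfun μ c) (fun c hc => vfun_mem μ hc)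
    (fun c hc c' hc' hcc => vfun_inj μ hc hc' hcc) ?_ (fun c hc => rfl)
  · intro m hm
    have hcard : (Finset.Icc 1 μ.card).card ≤ μ.cells.card := by
      simp [Nat.card_Icc, YoungDiagram.card]
    obtain ⟨c, hc, hcm⟩ :=
      Finset.surj_on_of_inj_on_of_card_le (fun c (_ : c ∈ μ.cells) => vfun μ c)
        (fun c hc => vfun_mem μ hc) (fun c c' hc hc' hcc => vfun_inj μ hc hc' hcc) hcard m hm
    exact ⟨c, hc, hcm.symm⟩

lemma key_count {j : ℕ} (hj : j ≤ ww μ) : tt μ (ww μ) * ss μ j ≤ ss μ (ww μ) * tt μ j := by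
  have hs : ss μ (ww μ) = ss μ j + ∑ a ∈ Finset.Ico j (ww μ), hh μ a :=
    sum_range_split (hh μ) hj
  have ht : tt μ (ww μ) = tt μ j + ∑ a ∈ Finset.Ico j (ww μ), (hh μ a - 1) :=
    sum_range_split (fun b => hh μ b - 1) hj
  have hQP : (∑ a ∈ Finset.Ico j (ww μ), (hh μ a - 1)) * ss μ j
      ≤ (∑ a ∈ Finset.Ico j (ww μ), hh μ a) * tt μ j := by
    show _ * (∑ b ∈ Finset.range j, hh μ b) ≤ _ * (∑ b ∈ Finset.range j, (hh μ b - 1))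
    rw [Finset.sum_mul_sum, Finset.sum_mul_sum]
    refine Finset.sum_le_sum (fun a ha => Finset.sum_le_sum (fun b hb => ?_))
    have hba : hh μ a ≤ hh μ b :=
      h_anti μ (le_of_lt (lt_of_lt_of_le (Finset.mem_range.1 hb) (Finset.mem_Ico.1 ha).1))
    have h1 : 1 ≤ hh μ b := h_pos μ (lt_of_lt_of_le (Finset.mem_range.1 hb) hj)
    have e1 : (hh μ a - 1) * hh μ b = hh μ a * hh μ b - hh μ b := by
      rw [Nat.sub_mul, one_mul]
    have e2 : hh μ a * (hh μ b - 1) = hh μ a * hh μ b - hh μ a := by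
      rw [Nat.mul_sub, mul_one]
    rw [e1, e2]
    exact Nat.sub_le_sub_left hba _
  rw [hs, ht, add_mul, add_mul, mul_comm (tt μ j) (ss μ j)]
  exact Nat.add_le_add_left hQP _

lemma suffix_nonneg (a : ℕ → ℤ) (hmono : ∀ ⦃x y : ℕ⦄, x ≤ y → a x ≤ a y) (hsz : ℕ)
    (hfull : 0 ≤ ∑ i ∈ Finset.range hsz, a i) (i₀ : ℕ) :
    0 ≤ ∑ i ∈ Finset.Ico i₀ hsz, a i := by
  rcases le_or_gt hsz i₀ with hle | hlt
  · rw [Finset.Ico_eq_empty (by omega)]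
    simp
  rcases le_or_gt 0 (a i₀) with hpos | hneg
  · exact Finset.sum_nonneg (fun i hi => le_trans hpos (hmono (Finset.mem_Ico.1 hi).1))
  · have hsplit : ∑ i ∈ Finset.Ico i₀ hsz, a i
        = ∑ i ∈ Finset.range hsz, a i - ∑ i ∈ Finset.range i₀, a i :=
      Finset.sum_Ico_eq_sub a (le_of_lt hlt)
    have hpre : ∑ i ∈ Finset.range i₀, a i ≤ 0 :=
      Finset.sum_nonpos (fun i hi =>
        le_trans (hmono (le_of_lt (Finset.mem_range.1 hi))) (le_of_lt hneg))
    linarith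

lemma abel_nonneg {ι : Type*} (s : Finset ι) (v : ι → ℕ) (g : ι → ℝ) (f : ℕ → ℝ) (n : ℕ)
    (hv : ∀ c ∈ s, v c ∈ Finset.Icc 1 n)
    (hf1 : 0 ≤ f 1)
    (hmono : ∀ ⦃a b : ℕ⦄, 1 ≤ a → a ≤ b → f a ≤ f b)
    (hT : ∀ r : ℕ, 0 ≤ ∑ c ∈ s.filter (fun c => r ≤ v c), g c) :
    0 ≤ ∑ c ∈ s, f (v c) * g c := by
  classical
  have tele0 : ∀ m : ℕ, 1 ≤ m → f m = f 1 + ∑ r ∈ Finset.Icc 2 m, (f r - f (r-1)) := by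
    intro m hm
    induction m, hm using Nat.le_induction with
    | base => simp
    | succ m hm ih =>
      rw [Finset.sum_Icc_succ_top (by omega), ← add_assoc, ← ih]
      simp
  have tele : ∀ m : ℕ, 1 ≤ m → m ≤ n →
      f m = f 1 + ∑ r ∈ Finset.Icc 2 n, (if r ≤ m then f r - f (r-1) else 0) := by
    intro m hm hmn
    have hfil : (Finset.Icc 2 n).filter (fun r => r ≤ m) = Finset.Icc 2 m := by
      ext r
      simp only [Finset.mem_filter, Finset.mem_Icc]
      omega
    rw [← Finset.sum_filter, hfil]
    exact tele0 m hm
  have hrw : ∑ c ∈ s, f (v c) * g c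
      = f 1 * ∑ c ∈ s, g c
        + ∑ r ∈ Finset.Icc 2 n, (f r - f (r-1)) * (∑ c ∈ s.filter (fun c => r ≤ v c), g c) := by
    have step1 : ∀ c ∈ s, f (v c) * g c
        = f 1 * g c + ∑ r ∈ Finset.Icc 2 n, (if r ≤ v c then (f r - f (r-1)) * g c else 0) := by
      intro c hc
      obtain ⟨h1, h2⟩ := Finset.mem_Icc.1 (hv c hc)
      rw [tele (v c) h1 h2, add_mul, Finset.sum_mul]
      congr 1
      refine Finset.sum_congr rfl (fun r _ => ?_)
      split <;> simp
    rw [Finset.sum_congr rfl step1, Finset.sum_add_distrib, Finset.mul_sum]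
    congr 1
    rw [Finset.sum_comm]
    refine Finset.sum_congr rfl (fun r _ => ?_)
    rw [Finset.mul_sum, Finset.sum_filter]
  rw [hrw]
  have t1 : 0 ≤ f 1 * ∑ c ∈ s, g c := by
    have : s.filter (fun c => 0 ≤ v c) = s := Finset.filter_true_of_mem (fun c _ => Nat.zero_le _)
    have h0 := hT 0
    rw [this] at h0
    exact mul_nonneg hf1 h0
  have t2 : 0 ≤ ∑ r ∈ Finset.Icc 2 n, (f r - f (r-1)) * (∑ c ∈ s.filter (fun c => r ≤ v c), g c) := by
    refine Finset.sum_nonneg (fun r hr => mul_nonneg ?_ (hT r))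
    obtain ⟨h2, _⟩ := Finset.mem_Icc.1 hr
    have := hmono (a := r - 1) (b := r) (by omega) (by omega)
    linarith
  linarith

lemma col_claim (μ : YoungDiagram) {j : ℕ} (hj : j < ww μ) (i₀ : ℕ) :
    0 ≤ ∑ i ∈ Finset.Ico i₀ (hh μ j),
      ((ss μ (ww μ) : ℤ) * (2 * i + tt μ j) - (tt μ (ww μ) : ℤ) * (ss μ j + i + 1)) := by
  have hkn : tt μ (ww μ) ≤ ss μ (ww μ) := Finset.sum_le_sum (fun b _ => Nat.sub_le _ _)
  set A : ℕ → ℤ := fun i =>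
    ((ss μ (ww μ) : ℤ) * (2 * i + tt μ j) - (tt μ (ww μ) : ℤ) * (ss μ j + i + 1)) with hAdef
  show 0 ≤ ∑ i ∈ Finset.Ico i₀ (hh μ j), A i
  have hNK : (tt μ (ww μ) : ℤ) ≤ (ss μ (ww μ) : ℤ) := by exact_mod_cast hkn
  have hKnn : (0:ℤ) ≤ (tt μ (ww μ) : ℤ) := Int.natCast_nonneg _
  refine suffix_nonneg A ?_ (hh μ j) ?_ i₀
  · intro x y hxy
    have h2 : (x : ℤ) ≤ (y : ℤ) := by exact_mod_cast hxy
    simp only [hAdef]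
    nlinarith
  · have hK1 : (tt μ (ww μ) : ℤ) * (ss μ (j+1) : ℤ) ≤ (ss μ (ww μ) : ℤ) * (tt μ (j+1) : ℤ) := by
      exact_mod_cast key_count μ (Nat.succ_le_of_lt hj)
    have hs1 : ss μ (j+1) = ss μ j + hh μ j := Finset.sum_range_succ _ _
    have ht1 : tt μ (j+1) = tt μ j + (hh μ j - 1) := Finset.sum_range_succ _ _
    have hh1 : 1 ≤ hh μ j := h_pos μ hj
    have hK1' : (tt μ (ww μ) : ℤ) * ((ss μ j : ℤ) + (hh μ j : ℤ))
        ≤ (ss μ (ww μ) : ℤ) * ((tt μ j : ℤ) + ((hh μ j : ℤ) - 1)) := by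
      have e1 : ((tt μ (j+1) : ℕ) : ℤ) = (tt μ j : ℤ) + ((hh μ j : ℤ) - 1) := by
        rw [ht1]
        push_cast [Nat.cast_sub hh1]
        ring
      have e2 : ((ss μ (j+1) : ℕ) : ℤ) = (ss μ j : ℤ) + (hh μ j : ℤ) := by
        rw [hs1]; push_cast; ring
      rw [← e1, ← e2]
      exact hK1
    set S : ℤ := ∑ i ∈ Finset.range (hh μ j), (i : ℤ) with hSdef
    have hgauss : 2 * S = (hh μ j : ℤ) * ((hh μ j : ℤ) - 1) := by
      have hg := Finset.sum_range_id_mul_two (hh μ j)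
      have hcast := congrArg (fun x : ℕ => (x : ℤ)) hg
      push_cast [Nat.cast_sub hh1] at hcast
      simp only [hSdef]
      linarith
    have hSnn : 0 ≤ S := Finset.sum_nonneg (fun i _ => Int.natCast_nonneg i)
    have hexp : ∑ i ∈ Finset.range (hh μ j), A i
        = (2 * (ss μ (ww μ) : ℤ) - (tt μ (ww μ) : ℤ)) * S
          + (hh μ j : ℤ) * ((ss μ (ww μ) : ℤ) * (tt μ j : ℤ)
              - (tt μ (ww μ) : ℤ) * (ss μ j : ℤ) - (tt μ (ww μ) : ℤ)) := by
      calc ∑ i ∈ Finset.range (hh μ j), A i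
          = ∑ i ∈ Finset.range (hh μ j),
              ((2 * (ss μ (ww μ) : ℤ) - (tt μ (ww μ) : ℤ)) * (i : ℤ)
                + ((ss μ (ww μ) : ℤ) * (tt μ j : ℤ)
                    - (tt μ (ww μ) : ℤ) * (ss μ j : ℤ) - (tt μ (ww μ) : ℤ))) :=
            Finset.sum_congr rfl (fun i _ => by simp only [hAdef]; ring)
        _ = _ := by
            rw [Finset.sum_add_distrib, ← Finset.mul_sum, Finset.sum_const, Finset.card_range,
              nsmul_eq_mul, ← hSdef]
    rw [hexp]
    have hhc : (1 : ℤ) ≤ (hh μ j : ℤ) := by exact_mod_cast hh1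
    nlinarith [mul_nonneg (by linarith : (0:ℤ) ≤ (hh μ j : ℤ))
        (by linarith : (0:ℤ) ≤ (ss μ (ww μ) : ℤ) * ((tt μ j : ℤ) + ((hh μ j : ℤ) - 1))
          - (tt μ (ww μ) : ℤ) * ((ss μ j : ℤ) + (hh μ j : ℤ))),
      mul_nonneg hKnn hSnn, hgauss]

lemma tails (μ : YoungDiagram) (r : ℕ) :
    0 ≤ ∑ c ∈ μ.cells.filter (fun c => r ≤ vfun μ c),
      ((ss μ (ww μ) : ℤ) * (2 * c.1 + tt μ c.2) - (tt μ (ww μ) : ℤ) * (vfun μ c)) := by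
  rw [Finset.sum_filter, cells_sum μ (fun c => if r ≤ vfun μ c then
      ((ss μ (ww μ) : ℤ) * (2 * c.1 + tt μ c.2) - (tt μ (ww μ) : ℤ) * (vfun μ c)) else 0)]
  refine Finset.sum_nonneg (fun j hj => ?_)
  have hj' : j < ww μ := Finset.mem_range.1 hj
  have hfil : ∑ i ∈ Finset.range (hh μ j), (if r ≤ vfun μ (i, j) then
      ((ss μ (ww μ) : ℤ) * (2 * (i, j).1 + tt μ (i, j).2)
        - (tt μ (ww μ) : ℤ) * (vfun μ (i, j))) else 0)
      = ∑ i ∈ (Finset.range (hh μ j)).filter (fun i => r ≤ ss μ j + i + 1),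
          ((ss μ (ww μ) : ℤ) * (2 * i + tt μ j) - (tt μ (ww μ) : ℤ) * (ss μ j + i + 1)) := by
    rw [Finset.sum_filter]
    refine Finset.sum_congr rfl (fun a _ => ?_)
    simp only [vfun]
    push_cast
    norm_num
  rw [hfil]
  have hset : (Finset.range (hh μ j)).filter (fun i => r ≤ ss μ j + i + 1)
      = Finset.Ico (r - (ss μ j + 1)) (hh μ j) := by
    ext a
    simp only [Finset.mem_filter, Finset.mem_range, Finset.mem_Ico]
    omega
  rw [hset]
  exact col_claim μ hj' _

lemma pointwise2 (μ : YoungDiagram) {i j : ℕ} (hj : j < ww μ) (hi : i < hh μ j) :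
    min ((ss μ j + i + 1) / 2) (tt μ (ww μ)) ≤ 2 * i + tt μ j := by
  rcases le_or_gt (tt μ (ww μ)) (2 * i + tt μ j) with hk | hk
  · exact le_trans (min_le_right _ _) hk
  · have hsplit : tt μ (ww μ) = tt μ j + ∑ a ∈ Finset.Ico j (ww μ), (hh μ a - 1) :=
      sum_range_split _ (le_of_lt hj)
    have hex : ∃ a ∈ Finset.Ico j (ww μ), 1 ≤ hh μ a - 1 := by
      by_contra hcon
      push_neg at hcon
      have hz : ∑ a ∈ Finset.Ico j (ww μ), (hh μ a - 1) = 0 :=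
        Finset.sum_eq_zero (fun a ha => by have := hcon a ha; omega)
      omega
    obtain ⟨a, ha, ha2⟩ := hex
    have h2 : ∀ b ∈ Finset.range j, 2 ≤ hh μ b := by
      intro b hb
      have hba : hh μ a ≤ hh μ b :=
        h_anti μ (le_trans (le_of_lt (Finset.mem_range.1 hb)) (Finset.mem_Ico.1 ha).1)
      omega
    have hsj : 2 * j ≤ ss μ j := by
      calc 2 * j = ∑ _b ∈ Finset.range j, 2 := by
            rw [Finset.sum_const, Finset.card_range, smul_eq_mul, mul_comm]
        _ ≤ ss μ j := Finset.sum_le_sum h2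
    have hstj : ss μ j = tt μ j + j := s_eq μ (le_of_lt hj)
    have hjt : j ≤ tt μ j := by omega
    have : (ss μ j + i + 1) / 2 ≤ 2 * i + tt μ j := by omega
    exact le_trans (min_le_left _ _) this

lemma sum_halves (k : ℕ) : ∑ m ∈ Finset.Icc 1 (2 * k), (m / 2) = k * k := by
  induction k with
  | zero => simp
  | succ k ih =>
    have e1 : 2 * (k + 1) = (2 * k + 1) + 1 := by ring
    rw [e1, Finset.sum_Icc_succ_top (by omega), Finset.sum_Icc_succ_top (by omega), ih]
    have e2 : (2 * k + 1) / 2 = k := by omega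
    have e3 : (2 * k + 1 + 1) / 2 = k + 1 := by omega
    rw [e2, e3]
    ring

lemma sum_delta (k : ℕ) : ∀ n : ℕ, 2 * k ≤ n →
    ∑ m ∈ Finset.Icc 1 n, min (m / 2) k = k * (n - k) := by
  refine Nat.le_induction ?_ ?_
  · have : ∀ m ∈ Finset.Icc 1 (2 * k), min (m / 2) k = m / 2 := by
      intro m hm
      have := (Finset.mem_Icc.1 hm).2
      have : m / 2 ≤ k := by omega
      exact min_eq_left this
    rw [Finset.sum_congr rfl this, sum_halves]
    have : 2 * k - k = k := by omega
    rw [this]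
  · intro n hn ih
    rw [Finset.sum_Icc_succ_top (by omega), ih]
    have hmin : min ((n + 1) / 2) k = k := min_eq_right (by omega)
    rw [hmin]
    have h1 : n - k + 1 = n + 1 - k := by omega
    calc k * (n - k) + k = k * (n - k + 1) := by ring
      _ = k * (n + 1 - k) := by rw [h1]

end EigAux

open EigAux in
/-- Eigenvalue bounds for biased shuffles with `α ≥ 1`: if `λ ⊢ n` has first part
`λ₁ = n − k`, then `eig_α(T_λ^↓) ≤ 1 − k/n`; moreover, if `k ≤ n/4` then
`eig_α(T_λ^↓) ≤ 1 − k·(n−k)·N_{α−1}(n)/(n·N_α(n))`. -/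
theorem eigb_colTab_bound_large_alpha (α : ℝ) (hα : 1 ≤ α) (n : ℕ)
    (μ : YoungDiagram) (hcard : μ.card = n) (k : ℕ) (hk : μ.rowLen 0 + k = n) :
    eigb α μ (colTab μ) ≤ 1 - (k : ℝ) / (n : ℝ) ∧
      ((k : ℝ) ≤ (n : ℝ) / 4 →
        eigb α μ (colTab μ) ≤
          1 - ((k : ℝ) * ((n : ℝ) - (k : ℝ)) * Nalpha (α - 1) n) / ((n : ℝ) * Nalpha α n)) := by
  classical
  rcases Nat.eq_zero_or_pos n with hn0 | hn
  · subst hn0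
    have hk0 : k = 0 := by omega
    subst hk0
    have hcells : μ.cells = ∅ := Finset.card_eq_zero.1 hcard
    have hzero : eigb α μ (colTab μ) = 0 := by
      rw [eigb, hcells]
      simp
    rw [hzero]
    norm_num
  -- main case n ≥ 1
  have hn0R : (0:ℝ) < n := by exact_mod_cast hn
  have hwn : ww μ + k = n := hk
  have hsw : ss μ (ww μ) = n := by rw [s_w]; exact hcard
  have hse : ss μ (ww μ) = tt μ (ww μ) + ww μ := s_eq μ le_rfl
  have htw : tt μ (ww μ) = k := by omega
  set f : ℕ → ℝ := fun m => (m : ℝ) ^ (α - 1) with hfdef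
  have hf_nonneg : ∀ m : ℕ, 0 ≤ f m := fun m => Real.rpow_nonneg (Nat.cast_nonneg m) _
  have hf_mono : ∀ ⦃a b : ℕ⦄, 1 ≤ a → a ≤ b → f a ≤ f b := by
    intro a b ha hab
    exact Real.rpow_le_rpow (by positivity) (by exact_mod_cast hab) (by linarith)
  have hf1 : 0 ≤ f 1 := hf_nonneg 1
  have hfval : ∀ m : ℕ, 1 ≤ m → (m : ℝ) * f m = (m : ℝ) ^ α := by
    intro m hm
    have hm0 : (0:ℝ) < m := by exact_mod_cast hm
    rw [hfdef]
    have := Real.rpow_add_one (ne_of_gt hm0) (α - 1)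
    rw [sub_add_cancel] at this
    rw [this]
    ring
  have hNeq : Nalpha α n = ∑ m ∈ Finset.Icc 1 n, (m:ℝ) * f m := by
    rw [Nalpha]
    exact Finset.sum_congr rfl (fun m hm => (hfval m (Finset.mem_Icc.1 hm).1).symm)
  have hNpos : 0 < Nalpha α n := by
    rw [Nalpha]
    refine Finset.sum_pos (fun m hm => ?_) (Finset.nonempty_Icc.2 hn)
    have : (0:ℝ) < m := by exact_mod_cast (Finset.mem_Icc.1 hm).1
    exact Real.rpow_pos_of_pos this _
  have hN1eq : Nalpha (α - 1) n = ∑ m ∈ Finset.Icc 1 n, f m := rfl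
  have hN1nonneg : 0 ≤ Nalpha (α - 1) n :=
    Finset.sum_nonneg (fun m _ => Real.rpow_nonneg (Nat.cast_nonneg m) _)
  set S : ℝ := ∑ c ∈ μ.cells, (((c.2 : ℝ) - (c.1 : ℝ) + 1) * f (vfun μ c)) with hSdef
  have heig : eigb α μ (colTab μ) = (Nalpha α n)⁻¹ * S := by
    rw [eigb, hcard, hSdef]
    congr 1
    refine Finset.sum_congr rfl (fun c hc => ?_)
    have hcc : colTab μ c = vfun μ c := by
      conv_lhs => rw [← Prod.mk.eta (p := c)]
      rw [colTab_eq μ (by rw [Prod.mk.eta]; exact hc)]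
      rfl
    rw [hcc]
  set D : ℝ := ∑ c ∈ μ.cells, ((2 * c.1 + tt μ c.2 : ℕ) : ℝ) * f (vfun μ c) with hDdef
  have hNcells : Nalpha α n = ∑ c ∈ μ.cells, ((vfun μ c : ℕ) : ℝ) * f (vfun μ c) := by
    rw [hNeq, ← hcard]
    exact (sum_vfun μ (fun m => (m:ℝ) * f m)).symm
  have hSD : S + D = Nalpha α n := by
    rw [hNcells, hSdef, hDdef, ← Finset.sum_add_distrib]
    refine Finset.sum_congr rfl (fun c hc => ?_)
    have hmem := (mem_cells_iff μ (i := c.1) (j := c.2)).1 (by rw [Prod.mk.eta]; exact hc)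
    have hst : ss μ c.2 = tt μ c.2 + c.2 := s_eq μ (le_of_lt hmem.1)
    have hv : ((vfun μ c : ℕ) : ℝ)
        = ((c.2 : ℝ) - (c.1:ℝ) + 1) + ((2 * c.1 + tt μ c.2 : ℕ) : ℝ) := by
      show ((ss μ c.2 + c.1 + 1 : ℕ) : ℝ) = _
      rw [hst]
      push_cast
      ring
    rw [← add_mul, ← hv]
  -- Bound 1 via Abel summation
  have habel : 0 ≤ ∑ c ∈ μ.cells, f (vfun μ c) *
      ((((n : ℤ) * (2 * c.1 + tt μ c.2) - (k : ℤ) * (vfun μ c)) : ℤ) : ℝ) := by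
    refine abel_nonneg μ.cells (vfun μ)
      (fun c => ((((n : ℤ) * (2 * c.1 + tt μ c.2) - (k : ℤ) * (vfun μ c)) : ℤ) : ℝ))
      f n ?_ hf1 hf_mono ?_
    · intro c hc
      rw [← hcard]
      exact vfun_mem μ hc
    · intro r
      have h0 := tails μ r
      rw [hsw, htw] at h0
      exact_mod_cast h0
  have hexp : ∑ c ∈ μ.cells, f (vfun μ c) *
      ((((n : ℤ) * (2 * c.1 + tt μ c.2) - (k : ℤ) * (vfun μ c)) : ℤ) : ℝ)
      = (n:ℝ) * D - (k:ℝ) * Nalpha α n := by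
    rw [hNcells, hDdef, Finset.mul_sum, Finset.mul_sum, ← Finset.sum_sub_distrib]
    refine Finset.sum_congr rfl (fun c hc => ?_)
    push_cast
    ring
  rw [hexp] at habel
  have hD2 : (k:ℝ)/n * Nalpha α n ≤ D := by
    rw [div_mul_eq_mul_div, div_le_iff₀ hn0R]
    nlinarith
  have hS1 : S ≤ (1 - (k:ℝ)/n) * Nalpha α n := by
    have e : (1 - (k:ℝ)/n) * Nalpha α n = Nalpha α n - (k:ℝ)/n * Nalpha α n := by ring
    rw [e]
    linarith
  constructor
  · rw [heig]
    have hmul : (Nalpha α n)⁻¹ * S ≤ (Nalpha α n)⁻¹ * ((1 - (k:ℝ)/n) * Nalpha α n) :=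
      mul_le_mul_of_nonneg_left hS1 (inv_nonneg.2 hNpos.le)
    have e : (Nalpha α n)⁻¹ * ((1 - (k:ℝ)/n) * Nalpha α n) = 1 - (k:ℝ)/n := by
      field_simp
    linarith
  -- Bound 2
  intro hk4
  have h2k : 2 * k ≤ n := by
    have h2kR : ((2 * k : ℕ) : ℝ) ≤ (n:ℝ) := by push_cast; linarith
    exact_mod_cast h2kR
  have hknN : k ≤ n := by omega
  have hdeltasum : ∑ m ∈ Finset.Icc 1 n, min (m / 2) k = k * (n - k) := sum_delta k n h2k
  have hDlow : ∑ m ∈ Finset.Icc 1 n, ((min (m / 2) k : ℕ) : ℝ) * f m ≤ D := by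
    rw [hDdef, ← hcard, ← sum_vfun μ (fun m => ((min (m / 2) k : ℕ) : ℝ) * f m)]
    refine Finset.sum_le_sum (fun c hc => ?_)
    have hmem := (mem_cells_iff μ (i := c.1) (j := c.2)).1 (by rw [Prod.mk.eta]; exact hc)
    have hpw := pointwise2 μ hmem.1 hmem.2
    rw [htw] at hpw
    have hpwR : ((min ((vfun μ c) / 2) k : ℕ) : ℝ) ≤ ((2 * c.1 + tt μ c.2 : ℕ) : ℝ) := by
      exact_mod_cast hpw
    exact mul_le_mul_of_nonneg_right hpwR (hf_nonneg _)
  have hgsum : ∑ m ∈ Finset.Icc 1 n, ((min (m / 2) k : ℕ) : ℝ) = ((k * (n - k) : ℕ) : ℝ) := by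
    rw [← Nat.cast_sum, hdeltasum]
  have hmono2 : MonovaryOn f (fun m : ℕ => ((min (m / 2) k : ℕ) : ℝ)) (Finset.Icc 1 n) := by
    intro i hi j hj hg
    have hij : i ≤ j := by
      by_contra hcon
      push_neg at hcon
      have hnat : min (j / 2) k ≤ min (i / 2) k := by
        have : j / 2 ≤ i / 2 := Nat.div_le_div_right (le_of_lt hcon)
        omega
      have : ((min (j / 2) k : ℕ) : ℝ) ≤ ((min (i / 2) k : ℕ) : ℝ) := by exact_mod_cast hnat
      simp only at hg
      linarith
    exact hf_mono (Finset.mem_Icc.1 hi).1 hij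
  have hcheb := hmono2.sum_mul_sum_le_card_mul_sum
  rw [Nat.card_Icc] at hcheb
  have hcard' : (n + 1 - 1 : ℕ) = n := by omega
  rw [hcard'] at hcheb
  have hprod : ∑ m ∈ Finset.Icc 1 n, f m * ((min (m / 2) k : ℕ) : ℝ)
      = ∑ m ∈ Finset.Icc 1 n, ((min (m / 2) k : ℕ) : ℝ) * f m :=
    Finset.sum_congr rfl (fun m _ => mul_comm _ _)
  rw [hprod, hgsum, ← hN1eq] at hcheb
  have hcastk : ((k * (n - k) : ℕ) : ℝ) = (k:ℝ) * ((n:ℝ) - (k:ℝ)) := by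
    push_cast [Nat.cast_sub hknN]
    ring
  have hD3 : (k:ℝ) * ((n:ℝ) - (k:ℝ)) * Nalpha (α - 1) n ≤ (n:ℝ) * D := by
    calc (k:ℝ) * ((n:ℝ) - (k:ℝ)) * Nalpha (α - 1) n
        = Nalpha (α - 1) n * ((k * (n - k) : ℕ) : ℝ) := by rw [hcastk]; ring
      _ ≤ (n:ℝ) * ∑ m ∈ Finset.Icc 1 n, ((min (m / 2) k : ℕ) : ℝ) * f m := hcheb
      _ ≤ (n:ℝ) * D := by
          exact mul_le_mul_of_nonneg_left hDlow (le_of_lt hn0R)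
  have hS2 : S ≤ Nalpha α n - (k:ℝ) * ((n:ℝ) - (k:ℝ)) * Nalpha (α - 1) n / n := by
    have : (k:ℝ) * ((n:ℝ) - (k:ℝ)) * Nalpha (α - 1) n / n ≤ D := by
      rw [div_le_iff₀ hn0R]
      nlinarith
    linarith
  rw [heig]
  have hmul : (Nalpha α n)⁻¹ * S
      ≤ (Nalpha α n)⁻¹ * (Nalpha α n - (k:ℝ) * ((n:ℝ) - (k:ℝ)) * Nalpha (α - 1) n / n) :=
    mul_le_mul_of_nonneg_left hS2 (inv_nonneg.2 hNpos.le)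
  have e : (Nalpha α n)⁻¹ * (Nalpha α n - (k:ℝ) * ((n:ℝ) - (k:ℝ)) * Nalpha (α - 1) n / n)
      = 1 - ((k:ℝ) * ((n:ℝ) - (k:ℝ)) * Nalpha (α - 1) n) / ((n:ℝ) * Nalpha α n) := by
    field_simp
  linarith
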